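/- Let L/K be a finite Galois extension with group Γ, and let G act on the K-algebra L = ∏ᵢ Lᵢ (a finite product of fields) through a surjection onto Γ permuting the factors transitively. Let e be a primitive idempotent with stabilizer G_e and F := eL. Then the functors e·(−) : Rep_L^⋊(G) → Rep_F^⋊(G_e) and (L⋊G) ⊗_{L⋊G_e} (−) : Rep_F^⋊(G_e) → Rep_L^⋊(G) are mutually inverse equivalences of categories. -/

import Mathlib

universe u

variable {ι : Type*} [Fintype ι] [DecidableEq ι]
variable {Li : ι → Type*} [∀ i, Field (Li i)]
variable {G : Type*} [Group G]

/-- The multiplicative group structure on `AddAut A` that Mathlib had at the time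
(multiplication is composition, `(g * h) x = g (h x)`); Mathlib now makes `AddAut A`
an additive group instead. -/
instance AddAut.instGroupMulOld {A : Type*} [Add A] : Group (AddAut A) where
  mul g h := AddEquiv.trans h g
  one := AddEquiv.refl _
  inv := AddEquiv.symm
  mul_assoc _ _ _ := rfl
  one_mul _ := rfl
  mul_one _ := rfl
  inv_mul_cancel := AddEquiv.self_trans_symm

/-- The stabilizer `G_e ≤ G` of the primitive idempotent `e = (δ_{i i₀})_i` of the
product of fields `L = ∏ i, Li i`, for an action `σ : G → Aut(L)`. -/
def stab (σ : G →* ((Π i, Li i) ≃+* (Π i, Li i))) (i₀ : ι) : Subgroup G where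
  carrier := {g | σ g (Pi.single i₀ 1) = Pi.single i₀ 1}
  one_mem' := by
    show σ 1 (Pi.single i₀ 1) = Pi.single i₀ 1
    rw [map_one]; rfl
  mul_mem' := by
    intro a b ha hb
    simp only [Set.mem_setOf_eq] at *
    have : σ (a * b) (Pi.single i₀ 1) = σ a (σ b (Pi.single i₀ 1)) := by
      rw [map_mul]; rfl
    rw [this, hb, ha]
  inv_mem' := by
    intro a ha
    simp only [Set.mem_setOf_eq] at *
    have h2 : σ a⁻¹ * σ a = 1 := by rw [← map_mul, inv_mul_cancel, map_one]
    calc σ a⁻¹ (Pi.single i₀ 1) = σ a⁻¹ (σ a (Pi.single i₀ 1)) := by rw [ha]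
      _ = (σ a⁻¹ * σ a) (Pi.single i₀ 1) := rfl
      _ = Pi.single i₀ 1 := by rw [h2]; rfl

set_option linter.unusedSectionVars false

lemma addAutOld_mul_apply {A : Type*} [Add A] (g h : AddAut A) (x : A) :
    (g * h) x = g (h x) := rfl

lemma single_injective {i j : ι} (h : Pi.single i (1 : Li i) = (Pi.single j 1 : Π k, Li k)) :
    i = j := by
  by_contra hne
  have := congrFun h i
  rw [Pi.single_eq_same, Pi.single_eq_of_ne hne] at this
  exact one_ne_zero this

lemma sigma_inv_apply (σ : G →* ((Π i, Li i) ≃+* (Π i, Li i))) (x : G) (a : Π i, Li i) :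
    σ x⁻¹ (σ x a) = a := by
  have : σ x⁻¹ * σ x = 1 := by rw [← map_mul, inv_mul_cancel, map_one]
  calc σ x⁻¹ (σ x a) = (σ x⁻¹ * σ x) a := rfl
    _ = a := by rw [this]; rfl

lemma idem_classify (u : Π i, Li i) (hidem : u * u = u) (k : ι) : u k = 0 ∨ u k = 1 := by
  have h : u k * u k = u k := congrFun hidem k
  have : u k * (u k - 1) = 0 := by linear_combination h
  rcases mul_eq_zero.mp this with h' | h'
  · exact Or.inl h'
  · exact Or.inr (by linear_combination h')

lemma single_idem (m : ι) :
    (Pi.single m 1 : Π i, Li i) * Pi.single m 1 = Pi.single m 1 := by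
  ext k
  by_cases hk : k = m
  · subst hk; simp
  · simp [Pi.single_eq_of_ne hk]

lemma single_mul_single_ne {i j : ι} (h : i ≠ j) :
    (Pi.single i 1 : Π k, Li k) * Pi.single j 1 = 0 := by
  ext k
  rw [Pi.mul_apply, Pi.zero_apply]
  by_cases hk : k = j
  · subst hk
    rw [Pi.single_eq_of_ne (fun hc => h hc.symm : k ≠ i), zero_mul]
  · rw [Pi.single_eq_of_ne hk, mul_zero]

/-- `σ x` sends the primitive idempotent `Pi.single i₀ 1` to another one. -/
lemma sigma_single_exists (σ : G →* ((Π i, Li i) ≃+* (Π i, Li i))) (i₀ : ι) (x : G) :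
    ∃ j, σ x (Pi.single i₀ 1) = Pi.single j 1 := by
  set u := σ x (Pi.single i₀ 1) with hu
  have hidem : u * u = u := by rw [hu, ← map_mul, single_idem]
  have hune : u ≠ 0 := by
    intro h0
    have : (Pi.single i₀ 1 : Π i, Li i) = 0 := by
      have := sigma_inv_apply σ x (Pi.single i₀ 1)
      rw [← hu, h0, map_zero] at this
      exact this.symm
    have := congrFun this i₀
    rw [Pi.single_eq_same] at this
    exact one_ne_zero this
  obtain ⟨j, hj⟩ : ∃ j, u j ≠ 0 := by
    by_contra h
    push_neg at h
    exact hune (funext fun k => h k)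
  have huj : u j = 1 := (idem_classify u hidem j).resolve_left hj
  refine ⟨j, ?_⟩
  set w := σ x⁻¹ (Pi.single j 1) with hw
  have hwidem : w * w = w := by rw [hw, ← map_mul, single_idem]
  have hwe : w * Pi.single i₀ 1 = w := by
    have h2 : (Pi.single j 1 : Π i, Li i) * u = Pi.single j 1 := by
      ext k
      by_cases hk : k = j
      · subst hk; simp [huj]
      · simp [Pi.single_eq_of_ne hk]
    have h3 := congrArg (σ x⁻¹) h2
    rw [map_mul, ← hw, hu, sigma_inv_apply] at h3
    exact h3
  have hxinv : σ x (σ x⁻¹ (Pi.single j 1)) = Pi.single j 1 := by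
    have := sigma_inv_apply σ x⁻¹ (Pi.single j 1)
    rwa [inv_inv] at this
  have hwne : w ≠ 0 := by
    intro h0
    have : (Pi.single j 1 : Π i, Li i) = 0 := by
      rw [← hxinv, ← hw, h0, map_zero]
    have := congrFun this j
    rw [Pi.single_eq_same] at this
    exact one_ne_zero this
  have hwsingle : w = Pi.single i₀ 1 := by
    have hk0 : ∀ k, k ≠ i₀ → w k = 0 := by
      intro k hk
      have := congrFun hwe k
      rw [Pi.mul_apply, Pi.single_eq_of_ne hk, mul_zero] at this
      exact this.symm
    have hwi₀ : w i₀ = 1 := by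
      rcases idem_classify w hwidem i₀ with h | h
      · exfalso
        apply hwne
        ext k
        by_cases hk : k = i₀
        · subst hk; exact h
        · exact hk0 k hk
      · exact h
    ext k
    by_cases hk : k = i₀
    · subst hk; rw [hwi₀, Pi.single_eq_same]
    · rw [hk0 k hk, Pi.single_eq_of_ne hk]
  have h4 := congrArg (σ x) hwsingle
  rw [hw, hxinv] at h4
  exact h4.symm

section Tau

variable (σ : G →* ((Π i, Li i) ≃+* (Π i, Li i))) (i₀ : ι)
variable (gs : ι → G) (tau : G → ι → ι)

lemma stab_mem_iff (g : G) : g ∈ stab σ i₀ ↔ σ g (Pi.single i₀ 1) = Pi.single i₀ 1 :=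
  Iff.rfl

lemma sigma_mul_apply (a b : G) (v : Π i, Li i) : σ (a * b) v = σ a (σ b v) := by
  rw [map_mul]; rfl

variable (Hτ : ∀ (g : G) (i : ι), σ g (Pi.single i 1) = Pi.single (tau g i) 1)

include Hτ in
lemma tau_mul (a b : G) (i : ι) : tau (a * b) i = tau a (tau b i) := by
  have h : σ (a * b) (Pi.single i 1) = Pi.single (tau a (tau b i)) 1 := by
    rw [sigma_mul_apply, Hτ, Hτ]
  exact single_injective ((Hτ (a * b) i).symm.trans h)

include Hτ in
lemma tau_one (i : ι) : tau 1 i = i := by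
  have h0 : σ (1 : G) (Pi.single i 1) = (Pi.single i 1 : Π k, Li k) := by
    rw [map_one]; rfl
  exact (single_injective (h0.symm.trans (Hτ 1 i))).symm

include Hτ in
lemma tau_inv_left (g : G) (i : ι) : tau g⁻¹ (tau g i) = i := by
  rw [← tau_mul σ tau Hτ, inv_mul_cancel, tau_one σ tau Hτ]

include Hτ in
lemma tau_inv_right (g : G) (i : ι) : tau g (tau g⁻¹ i) = i := by
  rw [← tau_mul σ tau Hτ, mul_inv_cancel, tau_one σ tau Hτ]

variable (Hgs : ∀ i, tau (gs i) i₀ = i)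

include Hτ Hgs in
lemma hh_mem (g : G) (i : ι) : (gs (tau g i))⁻¹ * g * gs i ∈ stab σ i₀ := by
  rw [stab_mem_iff]
  have h1 : σ (gs i) (Pi.single i₀ 1) = Pi.single i 1 := by rw [Hτ, Hgs]
  have h2 : σ (gs (tau g i)) (Pi.single i₀ 1) = Pi.single (tau g i) 1 := by rw [Hτ, Hgs]
  rw [mul_assoc, sigma_mul_apply, sigma_mul_apply, h1, Hτ, ← h2, sigma_inv_apply]

include Hτ in
lemma stab_iff_tau (g : G) : g ∈ stab σ i₀ ↔ tau g i₀ = i₀ := by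
  rw [stab_mem_iff]
  constructor
  · intro h
    exact single_injective ((Hτ g i₀).symm.trans h)
  · intro h
    rw [Hτ, h]

end Tau

section Model

variable (σ : G →* ((Π i, Li i) ≃+* (Π i, Li i))) (i₀ : ι)
variable (gs : ι → G) (tau : G → ι → ι)
variable {n : ℕ} (κ : ι ≃ Fin n)
variable (W : Type u) [AddCommGroup W] [Module (Π i, Li i) W]

/-- Carrier of the concrete induced module, as a type synonym to avoid instance clashes. -/
def Ind (n : ℕ) (W : Type u) : Type u := Fin n → W

instance : AddCommGroup (Ind n W) := Pi.addCommGroup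

/-- Twisted scalar multiplication on `Ind n W`. -/
noncomputable def indSMul (c : Π i, Li i) (φ : Ind n W) : Ind n W :=
  fun k => σ (gs (κ.symm k))⁻¹ c • φ k

/-- Twisted `L`-module structure on `Ind n W`. -/
noncomputable def indModule : Module (Π i, Li i) (Ind n W) where
  smul := indSMul σ gs κ W
  one_smul φ := funext fun k => by
    show σ (gs (κ.symm k))⁻¹ 1 • φ k = φ k
    rw [map_one, one_smul]
  mul_smul c d φ := funext fun k => by
    show σ (gs (κ.symm k))⁻¹ (c * d) • φ k
      = σ (gs (κ.symm k))⁻¹ c • (σ (gs (κ.symm k))⁻¹ d • φ k)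
    rw [map_mul, mul_smul]
  smul_zero c := funext fun k => by
    show σ (gs (κ.symm k))⁻¹ c • (0 : W) = 0
    rw [smul_zero]
  smul_add c φ ψ := funext fun k => by
    show σ (gs (κ.symm k))⁻¹ c • (φ k + ψ k)
      = σ (gs (κ.symm k))⁻¹ c • φ k + σ (gs (κ.symm k))⁻¹ c • ψ k
    rw [smul_add]
  add_smul c d φ := funext fun k => by
    show σ (gs (κ.symm k))⁻¹ (c + d) • φ k
      = σ (gs (κ.symm k))⁻¹ c • φ k + σ (gs (κ.symm k))⁻¹ d • φ k
    rw [map_add, add_smul]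
  zero_smul φ := funext fun k => by
    show σ (gs (κ.symm k))⁻¹ 0 • φ k = 0
    rw [map_zero, zero_smul]

end Model

section Model2

variable (σ : G →* ((Π i, Li i) ≃+* (Π i, Li i))) (i₀ : ι)
variable (gs : ι → G) (tau : G → ι → ι)
variable {n : ℕ} (κ : ι ≃ Fin n)
variable (W : Type u) [AddCommGroup W] [Module (Π i, Li i) W]
variable (ρW : (stab σ i₀) →* AddAut W)
variable (Hτ : ∀ (g : G) (i : ι), σ g (Pi.single i 1) = Pi.single (tau g i) 1)
variable (Hgs : ∀ i, tau (gs i) i₀ = i)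

/-- The stabilizer element `g_{τ(g)i}⁻¹ g g_i`. -/
noncomputable def hh (g : G) (i : ι) : stab σ i₀ :=
  ⟨(gs (tau g i))⁻¹ * g * gs i, hh_mem σ i₀ gs tau Hτ Hgs g i⟩

/-- The semilinear `G`-action on `Ind n W`. -/
noncomputable def indAct (g : G) (φ : Ind n W) : Ind n W :=
  fun k => ρW (hh σ i₀ gs tau Hτ Hgs g (tau g⁻¹ (κ.symm k)))
    (φ (κ (tau g⁻¹ (κ.symm k))))

lemma indAct_one (φ : Ind n W) : indAct σ i₀ gs tau κ W ρW Hτ Hgs 1 φ = φ := by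
  funext k
  show ρW (hh σ i₀ gs tau Hτ Hgs 1 (tau 1⁻¹ (κ.symm k))) (φ (κ (tau 1⁻¹ (κ.symm k)))) = φ k
  have h1 : tau 1⁻¹ (κ.symm k) = κ.symm k := by rw [inv_one, tau_one σ tau Hτ]
  have h2 : hh σ i₀ gs tau Hτ Hgs 1 (κ.symm k) = 1 := by
    apply Subtype.ext
    show (gs (tau 1 (κ.symm k)))⁻¹ * 1 * gs (κ.symm k) = 1
    rw [tau_one σ tau Hτ, mul_one, inv_mul_cancel]
  rw [h1, h2, map_one]
  show φ (κ (κ.symm k)) = φ k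
  rw [Equiv.apply_symm_apply]

lemma indAct_comp (a b : G) (φ : Ind n W) :
    indAct σ i₀ gs tau κ W ρW Hτ Hgs a (indAct σ i₀ gs tau κ W ρW Hτ Hgs b φ)
      = indAct σ i₀ gs tau κ W ρW Hτ Hgs (a * b) φ := by
  funext k
  have key : ∀ j : ι, ρW (hh σ i₀ gs tau Hτ Hgs a (tau a⁻¹ j))
      ((indAct σ i₀ gs tau κ W ρW Hτ Hgs b φ) (κ (tau a⁻¹ j)))
      = ρW (hh σ i₀ gs tau Hτ Hgs (a * b) (tau (a * b)⁻¹ j))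
        (φ (κ (tau (a * b)⁻¹ j))) := by
    intro j
    have hb : (indAct σ i₀ gs tau κ W ρW Hτ Hgs b φ) (κ (tau a⁻¹ j))
        = ρW (hh σ i₀ gs tau Hτ Hgs b (tau b⁻¹ (tau a⁻¹ j)))
          (φ (κ (tau b⁻¹ (tau a⁻¹ j)))) := by
      show ρW (hh σ i₀ gs tau Hτ Hgs b (tau b⁻¹ (κ.symm (κ (tau a⁻¹ j)))))
          (φ (κ (tau b⁻¹ (κ.symm (κ (tau a⁻¹ j)))))) = _
      rw [Equiv.symm_apply_apply]
    rw [hb]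
    have hci : tau (a * b)⁻¹ j = tau b⁻¹ (tau a⁻¹ j) := by
      rw [mul_inv_rev, tau_mul σ tau Hτ]
    have hkey : hh σ i₀ gs tau Hτ Hgs a (tau a⁻¹ j)
        * hh σ i₀ gs tau Hτ Hgs b (tau b⁻¹ (tau a⁻¹ j))
        = hh σ i₀ gs tau Hτ Hgs (a * b) (tau b⁻¹ (tau a⁻¹ j)) := by
      apply Subtype.ext
      show (gs (tau a (tau a⁻¹ j)))⁻¹ * a * gs (tau a⁻¹ j)
          * ((gs (tau b (tau b⁻¹ (tau a⁻¹ j))))⁻¹ * b * gs (tau b⁻¹ (tau a⁻¹ j)))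
          = (gs (tau (a * b) (tau b⁻¹ (tau a⁻¹ j))))⁻¹ * (a * b) * gs (tau b⁻¹ (tau a⁻¹ j))
      have h4 : tau (a * b) (tau b⁻¹ (tau a⁻¹ j)) = j := by
        rw [tau_mul σ tau Hτ, tau_inv_right σ tau Hτ, tau_inv_right σ tau Hτ]
      rw [tau_inv_right σ tau Hτ, tau_inv_right σ tau Hτ, h4]
      group
    rw [hci, ← addAutOld_mul_apply, ← map_mul, hkey]
  exact key (κ.symm k)

lemma indAct_add (g : G) (φ ψ : Ind n W) :
    indAct σ i₀ gs tau κ W ρW Hτ Hgs g (φ + ψ)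
      = indAct σ i₀ gs tau κ W ρW Hτ Hgs g φ + indAct σ i₀ gs tau κ W ρW Hτ Hgs g ψ := by
  funext k
  exact map_add (ρW (hh σ i₀ gs tau Hτ Hgs g (tau g⁻¹ (κ.symm k))) : W ≃+ W) _ _

lemma indAct_smul
    (HρW : ∀ (g : stab σ i₀) (c : Π i, Li i) (w : W), ρW g (c • w) = σ (g : G) c • ρW g w)
    (g : G) (c : Π i, Li i) (φ : Ind n W) :
    indAct σ i₀ gs tau κ W ρW Hτ Hgs g (indSMul σ gs κ W c φ)
      = indSMul σ gs κ W (σ g c) (indAct σ i₀ gs tau κ W ρW Hτ Hgs g φ) := by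
  funext k
  set i := tau g⁻¹ (κ.symm k) with hi
  show ρW (hh σ i₀ gs tau Hτ Hgs g i) (σ (gs (κ.symm (κ i)))⁻¹ c • φ (κ i))
      = σ (gs (κ.symm k))⁻¹ (σ g c) • ρW (hh σ i₀ gs tau Hτ Hgs g i) (φ (κ i))
  rw [Equiv.symm_apply_apply, HρW]
  congr 1
  show σ ((gs (tau g i))⁻¹ * g * gs i) (σ (gs i)⁻¹ c) = σ (gs (κ.symm k))⁻¹ (σ g c)
  have h5 : tau g i = κ.symm k := by rw [hi, tau_inv_right σ tau Hτ]
  rw [← sigma_mul_apply, ← sigma_mul_apply, h5]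
  congr 2
  group

/-- The `G`-action on `Ind n W` as a homomorphism to additive automorphisms. -/
noncomputable def indRho : G →* AddAut (Ind n W) where
  toFun g :=
    { toFun := indAct σ i₀ gs tau κ W ρW Hτ Hgs g
      invFun := indAct σ i₀ gs tau κ W ρW Hτ Hgs g⁻¹
      left_inv := fun φ => by
        rw [indAct_comp, inv_mul_cancel, indAct_one]
      right_inv := fun φ => by
        rw [indAct_comp, mul_inv_cancel, indAct_one]
      map_add' := indAct_add σ i₀ gs tau κ W ρW Hτ Hgs g }
  map_one' := by
    ext φ
    show indAct σ i₀ gs tau κ W ρW Hτ Hgs 1 φ = φ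
    rw [indAct_one]
  map_mul' := fun a b => by
    ext φ
    show indAct σ i₀ gs tau κ W ρW Hτ Hgs (a * b) φ
      = indAct σ i₀ gs tau κ W ρW Hτ Hgs a (indAct σ i₀ gs tau κ W ρW Hτ Hgs b φ)
    rw [indAct_comp]

lemma indRho_apply (g : G) (φ : Ind n W) :
    indRho σ i₀ gs tau κ W ρW Hτ Hgs g φ = indAct σ i₀ gs tau κ W ρW Hτ Hgs g φ := rfl

variable (Hgs0 : gs i₀ = 1)

include Hgs0 in
lemma indSingle_smul (c : Π i, Li i) (w : W) :
    indSMul σ gs κ W c (Pi.single (κ i₀) w) = Pi.single (κ i₀) (c • w) := by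
  funext k
  show σ (gs (κ.symm k))⁻¹ c • (Pi.single (κ i₀) w : Ind n W) k
    = (Pi.single (κ i₀) (c • w) : Ind n W) k
  by_cases hk : k = κ i₀
  · subst hk
    rw [Equiv.symm_apply_apply, Hgs0, inv_one]
    have : σ (1 : G) c = c := by rw [map_one]; rfl
    rw [this]
    rw [Pi.single_eq_same, Pi.single_eq_same]
  · rw [Pi.single_eq_of_ne hk, Pi.single_eq_of_ne hk, smul_zero]

include Hgs0 in
lemma indAct_single (h : stab σ i₀) (w : W) :
    indAct σ i₀ gs tau κ W ρW Hτ Hgs (h : G) (Pi.single (κ i₀) w)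
      = Pi.single (κ i₀) (ρW h w) := by
  funext k
  have hstab : ∀ x : G, x ∈ stab σ i₀ → tau x i₀ = i₀ := fun x hx =>
    (stab_iff_tau σ i₀ tau Hτ x).mp hx
  have hτh : tau ((h : G))⁻¹ i₀ = i₀ := hstab _ ((stab σ i₀).inv_mem h.2)
  show ρW (hh σ i₀ gs tau Hτ Hgs (h : G) (tau ((h : G))⁻¹ (κ.symm k)))
      ((Pi.single (κ i₀) w : Ind n W) (κ (tau ((h : G))⁻¹ (κ.symm k))))
    = (Pi.single (κ i₀) (ρW h w) : Ind n W) k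
  by_cases hk : k = κ i₀
  · subst hk
    rw [Equiv.symm_apply_apply, hτh, Pi.single_eq_same, Pi.single_eq_same]
    have harg : hh σ i₀ gs tau Hτ Hgs (h : G) i₀ = h := by
      apply Subtype.ext
      show (gs (tau (h : G) i₀))⁻¹ * (h : G) * gs i₀ = (h : G)
      rw [hstab _ h.2, Hgs0, mul_one, inv_one, one_mul]
    rw [harg]
  · have hne : κ (tau ((h : G))⁻¹ (κ.symm k)) ≠ κ i₀ := by
      intro hc
      apply hk
      have := κ.injective hc
      have h2 : tau (h : G) (tau ((h : G))⁻¹ (κ.symm k)) = tau (h : G) i₀ := by rw [this]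
      rw [tau_inv_right σ tau Hτ, hstab _ h.2] at h2
      rw [← h2, Equiv.apply_symm_apply]
    rw [Pi.single_eq_of_ne hne, Pi.single_eq_of_ne hk, map_zero]

end Model2

section Restrict

variable {R : Type*} [Semiring R] {T : Type*} [AddCommGroup T] [Module R T]

/-- Restriction of a `G`-action by additive automorphisms to an invariant submodule. -/
noncomputable def restrictAut (ρT : G →* AddAut T) (N : Submodule R T)
    (hN : ∀ (g : G) (t : T), t ∈ N → ρT g t ∈ N) : G →* AddAut N where
  toFun g :=
    { toFun := fun x => ⟨ρT g x, hN g x x.2⟩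
      invFun := fun x => ⟨ρT g⁻¹ x, hN g⁻¹ x x.2⟩
      left_inv := fun x => Subtype.ext (by
        show ρT g⁻¹ (ρT g x) = (x : T)
        rw [← addAutOld_mul_apply, ← map_mul, inv_mul_cancel, map_one]
        rfl)
      right_inv := fun x => Subtype.ext (by
        show ρT g (ρT g⁻¹ x) = (x : T)
        rw [← addAutOld_mul_apply, ← map_mul, mul_inv_cancel, map_one]
        rfl)
      map_add' := fun x y => Subtype.ext (by
        show ρT g ((x : T) + y) = ρT g x + ρT g y
        rw [map_add]) }
  map_one' := by
    ext x
    show ρT 1 x = (x : T)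
    rw [map_one]
    rfl
  map_mul' := fun a b => by
    ext x
    show ρT (a * b) x = ρT a (ρT b x)
    rw [map_mul]
    rfl

lemma restrictAut_coe (ρT : G →* AddAut T) (N : Submodule R T)
    (hN : ∀ (g : G) (t : T), t ∈ N → ρT g t ∈ N) (g : G) (x : N) :
    (restrictAut ρT N hN g x : T) = ρT g x := rfl

end Restrict

/-- Let `L = ∏ᵢ Lᵢ` be a finite product of fields, `Γ`-Galois over `K`,
with a group `G` acting on `L` through a surjection onto `Γ` permuting the factors
transitively; let `e` be a primitive idempotent with stabilizer `G_e` and `F = eL`.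
Then the functors `e·(−) : Rep_L^⋊(G) → Rep_F^⋊(G_e)` and
`(L⋊G) ⊗_{L⋊G_e} (−) : Rep_F^⋊(G_e) → Rep_L^⋊(G)` are mutually inverse equivalences:
for every `W ∈ Rep_F^⋊(G_e)` with induced module `(T, β)` (characterized by the
universal property of `(L⋊G) ⊗_{L⋊G_e} W`), the unit `ψ : W → e·T`, `w ↦ e • β w`, is
an isomorphism, and whenever `j : W ≅ e·V` for `V ∈ Rep_L^⋊(G)`, the counit
`φ : T → V` (the unique equivariant map with `φ ∘ β = j`, given by `λg ⊗ w ↦ λ·g(w)`)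
is an isomorphism. -/
theorem stmt7 (σ : G →* ((Π i, Li i) ≃+* (Π i, Li i))) (i₀ : ι)
    (htrans : ∀ i j : ι, ∃ g : G,
      σ g (Pi.single i (1 : Li i)) = Pi.single j (1 : Li j))
    -- `V`: a finite-rank free semilinear representation of `G` over `L`
    (V : Type u) [AddCommGroup V] [Module (Π i, Li i) V]
    [Module.Finite (Π i, Li i) V] [Module.Free (Π i, Li i) V]
    (ρ : G →* AddAut V)
    (hρ : ∀ (g : G) (c : Π i, Li i) (v : V), ρ g (c • v) = σ g c • ρ g v)
    -- `W`: a semilinear representation of `G_e` over `F = eL`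
    (W : Type u) [AddCommGroup W] [Module (Π i, Li i) W] [Module.Finite (Π i, Li i) W]
    (hW : ∀ w : W, (Pi.single i₀ (1 : Li i₀) : Π i, Li i) • w = w)
    (ρW : (stab σ i₀) →* AddAut W)
    (hρW : ∀ (g : stab σ i₀) (c : Π i, Li i) (w : W),
      ρW g (c • w) = σ (g : G) c • ρW g w)
    -- `(T, ρT, β)`: the induced module `(L⋊G) ⊗_{L⋊G_e} W`, via its universal property
    (T : Type u) [AddCommGroup T] [Module (Π i, Li i) T]
    (ρT : G →* AddAut T)
    (hρT : ∀ (g : G) (c : Π i, Li i) (t : T), ρT g (c • t) = σ g c • ρT g t)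
    (β : W →ₗ[Π i, Li i] T)
    (hβ : ∀ (g : stab σ i₀) (w : W), β (ρW g w) = ρT (g : G) (β w))
    (huniv : ∀ (U : Type u) [AddCommGroup U] [Module (Π i, Li i) U]
      (ρU : G →* AddAut U),
      (∀ (g : G) (c : Π i, Li i) (x : U), ρU g (c • x) = σ g c • ρU g x) →
      ∀ f : W →ₗ[Π i, Li i] U,
        (∀ (g : stab σ i₀) (w : W), f (ρW g w) = ρU (g : G) (f w)) →
        ∃! F : T →ₗ[Π i, Li i] U,
          (∀ (g : G) (t : T), F (ρT g t) = ρU g (F t)) ∧ ∀ w : W, F (β w) = f w) :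
    -- the unit `ψ : W → e·T` is an isomorphism onto `e·T`
    (Function.Injective (fun w : W => (Pi.single i₀ (1 : Li i₀) : Π i, Li i) • β w) ∧
      Set.range (fun w : W => (Pi.single i₀ (1 : Li i₀) : Π i, Li i) • β w)
        = {x : T | ∃ t : T, x = (Pi.single i₀ (1 : Li i₀) : Π i, Li i) • t}) ∧
    -- the counit `φ : T → V` is an isomorphism whenever `W ≅ e·V`
    (∀ j : W →ₗ[Π i, Li i] V, Function.Injective j →
      Set.range j = {x : V | ∃ v : V, x = (Pi.single i₀ (1 : Li i₀) : Π i, Li i) • v} →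
      (∀ (g : stab σ i₀) (w : W), j (ρW g w) = ρ (g : G) (j w)) →
      ∀ F : T →ₗ[Π i, Li i] V,
        (∀ (g : G) (t : T), F (ρT g t) = ρ g (F t)) →
        (∀ w : W, F (β w) = j w) →
        Function.Bijective F) := by
  classical
  -- Step 1: coset representatives and the action on indices
  obtain ⟨gs0, hgs0'⟩ : ∃ gs : ι → G, ∀ i, σ (gs i) (Pi.single i₀ 1) = Pi.single i 1 :=
    ⟨fun i => (htrans i₀ i).choose, fun i => (htrans i₀ i).choose_spec⟩
  set gs : ι → G := fun i => if i = i₀ then 1 else gs0 i with hgsdef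
  have Hgs0 : gs i₀ = 1 := if_pos rfl
  have hgs : ∀ i, σ (gs i) (Pi.single i₀ 1) = Pi.single i 1 := by
    intro i
    by_cases hi : i = i₀
    · subst hi
      rw [Hgs0, map_one]
      rfl
    · show σ (if i = i₀ then 1 else gs0 i) _ = _
      rw [if_neg hi]
      exact hgs0' i
  set tau : G → ι → ι := fun g i => (sigma_single_exists σ i₀ (g * gs i)).choose with htaudef
  have Hτ : ∀ (g : G) (i : ι), σ g (Pi.single i 1) = Pi.single (tau g i) 1 := by
    intro g i
    have h1 := (sigma_single_exists σ i₀ (g * gs i)).choose_spec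
    conv_lhs => rw [← hgs i, ← sigma_mul_apply]
    exact h1
  have Hgsτ : ∀ i, tau (gs i) i₀ = i := by
    intro i
    exact single_injective ((Hτ (gs i) i₀).symm.trans (hgs i))
  -- Step 2: basic facts
  have hψβ : ∀ w : W, (Pi.single i₀ 1 : Π i, Li i) • β w = β w := by
    intro w
    exact (β.map_smul (Pi.single i₀ 1) w).symm.trans (congrArg β (hW w))
  -- Step 3: injectivity of `β` via the concrete model
  have hβinj : Function.Injective β := by
    set κ : ι ≃ Fin (Fintype.card ι) := Fintype.equivFin ι with hκ
    letI : Module (Π i, Li i) (Ind (Fintype.card ι) W) := indModule σ gs κ W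
    have hρU : ∀ (g : G) (c : Π i, Li i) (φ : Ind (Fintype.card ι) W),
        indRho σ i₀ gs tau κ W ρW Hτ Hgsτ g (c • φ)
          = σ g c • indRho σ i₀ gs tau κ W ρW Hτ Hgsτ g φ :=
      fun g c φ => indAct_smul σ i₀ gs tau κ W ρW Hτ Hgsτ hρW g c φ
    let fβ : W →ₗ[Π i, Li i] Ind (Fintype.card ι) W :=
      { toFun := fun w => Pi.single (κ i₀) w
        map_add' := fun a b => Pi.single_add _ _ _
        map_smul' := fun c w => (indSingle_smul σ i₀ gs κ W Hgs0 c w).symm }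
    have hfβ : ∀ (g : stab σ i₀) (w : W),
        fβ (ρW g w) = indRho σ i₀ gs tau κ W ρW Hτ Hgsτ (g : G) (fβ w) :=
      fun g w => (indAct_single σ i₀ gs tau κ W ρW Hτ Hgsτ Hgs0 g w).symm
    obtain ⟨Fm, hFm, -⟩ := huniv (Ind (Fintype.card ι) W)
      (indRho σ i₀ gs tau κ W ρW Hτ Hgsτ) hρU fβ hfβ
    intro a b hab
    have h1 : fβ a = fβ b := by rw [← hFm.2 a, ← hFm.2 b, hab]
    have h2 := congrFun h1 (κ i₀)
    show a = b
    calc a = (Pi.single (κ i₀) a : Ind (Fintype.card ι) W) (κ i₀) :=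
          (Pi.single_eq_same (M := fun _ : Fin (Fintype.card ι) => W) (κ i₀) a).symm
      _ = (Pi.single (κ i₀) b : Ind (Fintype.card ι) W) (κ i₀) := h2
      _ = b := Pi.single_eq_same (M := fun _ : Fin (Fintype.card ι) => W) (κ i₀) b
  -- Step 4: `T` is generated by the translates of `β(W)`; hence `e·T ⊆ β(W)`
  obtain ⟨F₀, hF₀, hF₀uniq⟩ := huniv T ρT hρT β hβ
  have hid : LinearMap.id = F₀ := hF₀uniq _ ⟨fun g t => rfl, fun w => rfl⟩
  have hrangeN : ∀ t : T, (Pi.single i₀ 1 : Π i, Li i) • t ∈ Set.range β := by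
    set N : Submodule (Π i, Li i) T :=
      { carrier := {t | ∀ g : G, (Pi.single i₀ 1 : Π i, Li i) • ρT g t ∈ Set.range β}
        add_mem' := by
          intro a b ha hb g
          rw [map_add, smul_add]
          obtain ⟨w1, h1⟩ := ha g
          obtain ⟨w2, h2⟩ := hb g
          exact ⟨w1 + w2, by rw [map_add, h1, h2]⟩
        zero_mem' := by
          intro g
          rw [map_zero, smul_zero]
          exact ⟨0, map_zero β⟩
        smul_mem' := by
          intro c t ht g
          rw [hρT, smul_smul, mul_comm, ← smul_smul]
          obtain ⟨w, hw⟩ := ht g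
          exact ⟨σ g c • w, by rw [map_smul, hw]⟩ } with hN
    have hNstable : ∀ (g : G) (t : T), t ∈ N → ρT g t ∈ N := by
      intro g t ht g'
      rw [← addAutOld_mul_apply, ← map_mul]
      exact ht (g' * g)
    have hβN : ∀ w : W, β w ∈ N := by
      intro w g
      by_cases hg : tau g i₀ = i₀
      · have hgmem : g ∈ stab σ i₀ := by
          show σ g (Pi.single i₀ 1) = Pi.single i₀ 1
          rw [Hτ, hg]
        refine ⟨ρW ⟨g, hgmem⟩ w, ?_⟩
        rw [hβ ⟨g, hgmem⟩ w]
        show ρT g (β w) = Pi.single i₀ 1 • ρT g (β w)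
        conv_lhs => rw [← hψβ w]
        rw [hρT]
        have : σ g (Pi.single i₀ 1) = Pi.single i₀ 1 := hgmem
        rw [this]
      · refine ⟨0, ?_⟩
        rw [map_zero]
        conv_rhs => rw [← hψβ w]
        rw [hρT, smul_smul, Hτ, single_mul_single_ne (fun hc => hg hc.symm), zero_smul]
    have hρN : ∀ (g : G) (c : Π i, Li i) (x : N),
        restrictAut ρT N hNstable g (c • x) = σ g c • restrictAut ρT N hNstable g x := by
      intro g c x
      apply Subtype.ext
      show ρT g ((c • x : N) : T) = ((σ g c • restrictAut ρT N hNstable g x : N) : T)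
      rw [Submodule.coe_smul, Submodule.coe_smul, hρT]
      rfl
    have hfN : ∀ (g : stab σ i₀) (w : W),
        LinearMap.codRestrict N β hβN (ρW g w)
          = restrictAut ρT N hNstable (g : G) (LinearMap.codRestrict N β hβN w) := by
      intro g w
      apply Subtype.ext
      show β (ρW g w) = ρT (g : G) (β w)
      exact hβ g w
    obtain ⟨Fc, hFc, -⟩ := huniv N (restrictAut ρT N hNstable) hρN
      (LinearMap.codRestrict N β hβN) hfN
    have h1 : N.subtype.comp Fc = F₀ := by
      apply hF₀uniq
      constructor
      · intro g t
        show ((Fc (ρT g t) : N) : T) = ρT g ((Fc t : N) : T)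
        rw [hFc.1 g t]
        rfl
      · intro w
        show ((Fc (β w) : N) : T) = β w
        rw [hFc.2 w]
        rfl
    have hmem : ∀ t : T, t ∈ N := by
      intro t
      have h3 : N.subtype.comp Fc = LinearMap.id := h1.trans hid.symm
      have h4 := congrArg (fun f : T →ₗ[Π i, Li i] T => f t) h3
      show t ∈ N
      have h5 : ((Fc t : N) : T) = t := h4
      rw [← h5]
      exact (Fc t).2
    intro t
    have h6 := hmem t 1
    rw [map_one] at h6
    exact h6
  constructor
  · -- Part 1: the unit is an isomorphism onto `e·T`
    constructor
    · intro a b hab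
      simp only at hab
      rw [hψβ, hψβ] at hab
      exact hβinj hab
    · ext x
      simp only [Set.mem_range, Set.mem_setOf_eq]
      constructor
      · rintro ⟨w, rfl⟩
        exact ⟨β w, rfl⟩
      · rintro ⟨t, rfl⟩
        obtain ⟨w, hw⟩ := hrangeN t
        exact ⟨w, by rw [hψβ, hw]⟩
  · -- Part 2: the counit is an isomorphism
    intro j hjinj hjrange hjequi F hFequi hFβ
    have hje : ∀ w : W, j w = (Pi.single i₀ 1 : Π i, Li i) • j w := by
      intro w
      have h1 := j.map_smul (Pi.single i₀ 1) w
      rw [hW w] at h1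
      exact h1
    have hqex : ∀ v : V, ∃ w : W, j w = (Pi.single i₀ 1 : Π i, Li i) • v := by
      intro v
      have h1 : (Pi.single i₀ 1 : Π i, Li i) • v ∈ Set.range j := by
        rw [hjrange]
        exact ⟨v, rfl⟩
      exact h1
    choose q hq using hqex
    have hq_add : ∀ v v' : V, q (v + v') = q v + q v' := by
      intro v v'
      apply hjinj
      rw [map_add, hq, hq, hq, smul_add]
    have hq_smul : ∀ (c : Π i, Li i) (v : V), q (c • v) = c • q v := by
      intro c v
      apply hjinj
      rw [map_smul, hq, hq, smul_smul, smul_smul, mul_comm]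
    have hq_equi : ∀ (h : stab σ i₀) (v : V), q (ρ (h : G) v) = ρW h (q v) := by
      intro h v
      apply hjinj
      have hmem : σ (h : G) (Pi.single i₀ 1) = Pi.single i₀ 1 := h.2
      rw [hq, hjequi, hq, hρ, hmem]
    have hq_j : ∀ w : W, q (j w) = w := by
      intro w
      apply hjinj
      rw [hq, ← hje]
    have hσσ : ∀ (g : G) (c : Π i, Li i), σ g (σ g⁻¹ c) = c := by
      intro g c
      have := sigma_inv_apply σ g⁻¹ c
      rwa [inv_inv] at this
    let GG : V →ₗ[Π i, Li i] T :=
      { toFun := fun v => ∑ i : ι, ρT (gs i) (β (q (ρ (gs i)⁻¹ v)))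
        map_add' := by
          intro a b
          rw [← Finset.sum_add_distrib]
          apply Finset.sum_congr rfl
          intro i _
          rw [map_add, hq_add, map_add, map_add]
        map_smul' := by
          intro c v
          show ∑ i : ι, ρT (gs i) (β (q (ρ (gs i)⁻¹ (c • v))))
            = c • ∑ i : ι, ρT (gs i) (β (q (ρ (gs i)⁻¹ v)))
          rw [Finset.smul_sum]
          apply Finset.sum_congr rfl
          intro i _
          rw [hρ, hq_smul, map_smul, hρT, hσσ] }
    have hGG : ∀ v : V, GG v = ∑ i : ι, ρT (gs i) (β (q (ρ (gs i)⁻¹ v))) := fun v => rfl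
    have hGG_equi : ∀ (g : G) (v : V), GG (ρ g v) = ρT g (GG v) := by
      intro g v
      rw [hGG, hGG, map_sum]
      have hLHS : ∀ i : ι, ρT (gs i) (β (q (ρ (gs i)⁻¹ (ρ g v))))
          = ρT (gs i) (β (q (ρ ((gs i)⁻¹ * g) v))) := by
        intro i
        rw [← addAutOld_mul_apply, ← map_mul]
      have hRHS : ∀ i : ι, ρT g (ρT (gs i) (β (q (ρ (gs i)⁻¹ v))))
          = ρT (gs (tau g i)) (β (q (ρ ((gs (tau g i))⁻¹ * g) v))) := by
        intro i
        have hgmem : (gs (tau g i))⁻¹ * g * gs i ∈ stab σ i₀ :=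
          hh_mem σ i₀ gs tau Hτ Hgsτ g i
        have hdecomp : g * gs i = gs (tau g i) * ((gs (tau g i))⁻¹ * g * gs i) := by group
        rw [← addAutOld_mul_apply, ← map_mul, hdecomp, map_mul, addAutOld_mul_apply]
        have h2 : ρT ((gs (tau g i))⁻¹ * g * gs i) (β (q (ρ (gs i)⁻¹ v)))
            = β (ρW ⟨_, hgmem⟩ (q (ρ (gs i)⁻¹ v))) := (hβ ⟨_, hgmem⟩ _).symm
        rw [h2, ← hq_equi]
        have hmm2 : ((gs (tau g i))⁻¹ * g * gs i) * (gs i)⁻¹ = (gs (tau g i))⁻¹ * g := by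
          group
        have harg : (ρ ((gs (tau g i))⁻¹ * g * gs i)) ((ρ (gs i)⁻¹) v)
            = ρ ((gs (tau g i))⁻¹ * g) v := by
          rw [← addAutOld_mul_apply, ← map_mul, hmm2]
        show ρT (gs (tau g i)) (β (q (ρ ((gs (tau g i))⁻¹ * g * gs i) (ρ (gs i)⁻¹ v))))
          = ρT (gs (tau g i)) (β (q (ρ ((gs (tau g i))⁻¹ * g) v)))
        rw [harg]
      calc ∑ i : ι, ρT (gs i) (β (q (ρ (gs i)⁻¹ (ρ g v))))
          = ∑ i : ι, ρT (gs i) (β (q (ρ ((gs i)⁻¹ * g) v))) :=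
            Finset.sum_congr rfl fun i _ => hLHS i
        _ = ∑ i : ι, ρT (gs (tau g i)) (β (q (ρ ((gs (tau g i))⁻¹ * g) v))) :=
            (Fintype.sum_equiv
              ⟨tau g, tau g⁻¹, tau_inv_left σ tau Hτ g, tau_inv_right σ tau Hτ g⟩
              _ _ fun i => rfl).symm
        _ = ∑ i : ι, ρT g (ρT (gs i) (β (q (ρ (gs i)⁻¹ v)))) :=
            Finset.sum_congr rfl fun i _ => (hRHS i).symm
    have hGGF : ∀ w : W, GG (j w) = β w := by
      intro w
      rw [hGG]
      rw [Finset.sum_eq_single i₀]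
      · rw [Hgs0, inv_one, map_one]
        have e1 : (ρ (1 : G)) (j w) = j w := by rw [map_one]; rfl
        rw [e1, hq_j]
        rfl
      · intro i _ hi
        have hq0 : q (ρ (gs i)⁻¹ (j w)) = 0 := by
          apply hjinj
          rw [map_zero, hq]
          conv_lhs => rw [hje w]
          rw [hρ, smul_smul, Hτ]
          have hne : tau (gs i)⁻¹ i₀ ≠ i₀ := by
            intro hc
            apply hi
            have := congrArg (tau (gs i)) hc
            rw [tau_inv_right σ tau Hτ, Hgsτ] at this
            exact this.symm
          rw [single_mul_single_ne (fun hc => hne hc.symm), zero_smul]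
        rw [hq0, map_zero, map_zero]
      · intro h
        exact absurd (Finset.mem_univ i₀) h
    have hFGG : ∀ v : V, F (GG v) = v := by
      intro v
      rw [hGG, map_sum]
      have hterm : ∀ i : ι, F (ρT (gs i) (β (q (ρ (gs i)⁻¹ v))))
          = (Pi.single i 1 : Π k, Li k) • v := by
        intro i
        rw [hFequi, hFβ, hq, hρ]
        have h2 : ρ (gs i) (ρ (gs i)⁻¹ v) = v := by
          rw [← addAutOld_mul_apply, ← map_mul, mul_inv_cancel, map_one]
          rfl
        rw [h2, hgs]
      have hone : (∑ i : ι, (Pi.single i 1 : Π k, Li k)) = 1 := by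
        funext k
        rw [Finset.sum_apply]
        have hz : ∀ i ∈ Finset.univ, i ≠ k → (Pi.single i 1 : Π k, Li k) k = 0 :=
          fun i _ hi => Pi.single_eq_of_ne (Ne.symm hi) 1
        rw [Finset.sum_eq_single k hz (fun h => absurd (Finset.mem_univ k) h)]
        rw [Pi.single_eq_same]
        rfl
      calc ∑ i : ι, F (ρT (gs i) (β (q (ρ (gs i)⁻¹ v))))
          = ∑ i : ι, (Pi.single i 1 : Π k, Li k) • v :=
            Finset.sum_congr rfl fun i _ => hterm i
        _ = (∑ i : ι, (Pi.single i 1 : Π k, Li k)) • v := (Finset.sum_smul).symm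
        _ = v := by rw [hone, one_smul]
    obtain ⟨F₀', hF₀', hF₀uniq'⟩ := huniv T ρT hρT β hβ
    have hGGFid : GG.comp F = LinearMap.id := by
      have hc1 : GG.comp F = F₀ := by
        apply hF₀uniq
        constructor
        · intro g t
          show GG (F (ρT g t)) = ρT g (GG (F t))
          rw [hFequi, hGG_equi]
        · intro w
          show GG (F (β w)) = β w
          rw [hFβ, hGGF]
      rw [hc1, ← hid]
    constructor
    · intro a b hab
      have h1 := congrArg GG hab
      have h2 := congrArg (fun f : T →ₗ[Π i, Li i] T => f a) hGGFid
      have h3 := congrArg (fun f : T →ₗ[Π i, Li i] T => f b) hGGFid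
      show a = b
      calc a = GG.comp F a := h2.symm
        _ = GG.comp F b := h1
        _ = b := h3
    · intro v
      exact ⟨GG v, hFGG v⟩
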